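/- Fix an integer p ≥ 1, set n = 2p+1, and let θ, the couplings g_{ab}, and the matrices F_{ab} be as in the q = p+1 case of the AIII construction, with real parameters g ≠ 0, g_1 ≠ 0 and g_2 satisfying g_1² − 2·g² + g·g_2 = 0. Then the constraint equation Σ_{α} g_α F_α = 0 holds: Σ_{1 ≤ a ≠ b ≤ n} g_{ab}·F_{ab} = 0 as an n×n matrix. -/

import Mathlib

open Matrix

/-- The middle index `p+1` (0-based: `p`) of `{1,…,2p+1}`. -/
def pmid (p : ℕ) : Fin (2*p+1) := ⟨p, by omega⟩

/-- The involution `θ` of `{1,…,2p+1}` (0-based: `{0,…,2p}`) for the AIII construction with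
`q = p+1`: it exchanges the first and third blocks and fixes the middle index. -/
def theta2 (p : ℕ) (a : Fin (2*p+1)) : Fin (2*p+1) :=
  if h : (a : ℕ) < p then ⟨a + p + 1, by omega⟩
  else if h' : (a : ℕ) = p then a
  else ⟨(a : ℕ) - p - 1, by have := a.isLt; omega⟩

/-- The coupling constants for the AIII construction with `q = p+1`:
`g_{aa} = 0`; `g_{ab} = g₁` if exactly one of `a`, `b` is the middle index;
`g_{ab} = g₂` if `b = θ(a)` and `a` is not the middle index; and `g_{ab} = g` otherwise. -/
def g11 (p : ℕ) (g g1 g2 : ℝ) (a b : Fin (2*p+1)) : ℝ :=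
  if a = b then 0
  else if (a = pmid p ∧ b ≠ pmid p) ∨ (a ≠ pmid p ∧ b = pmid p) then g1
  else if b = theta2 p a ∧ a ≠ pmid p then g2
  else g

/-- The standard matrices `F_{ab}` (both `a`, `b` in the first or third block). -/
noncomputable def Fstd11 (p : ℕ) (a b : Fin (2*p+1)) :
    Matrix (Fin (2*p+1)) (Fin (2*p+1)) ℝ :=
  -(1/4 : ℝ) • (Matrix.single a a 1 + Matrix.single (theta2 p a) (theta2 p a) 1
      + Matrix.single b b 1 + Matrix.single (theta2 p b) (theta2 p b) 1)
    + ((2*p+1 : ℝ))⁻¹ • 1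

/-- The mixed matrices `F_{a,p+1}` (`a` in the first or third block, second index the
middle one). -/
noncomputable def Fmix11 (p : ℕ) (g g1 : ℝ) (a : Fin (2*p+1)) :
    Matrix (Fin (2*p+1)) (Fin (2*p+1)) ℝ :=
  -(g1/(4*g)) • (Matrix.single a a 1 + Matrix.single (theta2 p a) (theta2 p a) 1)
    - (g/(2*g1)) • Matrix.single (pmid p) (pmid p) 1
    + (((2*p+1 : ℝ))⁻¹ * (g1/(2*g) + g/(2*g1))) • 1

/-- The full family `F_{ab}` of the AIII construction with `q = p+1`, with
`F_{p+1,b} = F_{b,p+1}`. -/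
noncomputable def F11 (p : ℕ) (g g1 : ℝ) (a b : Fin (2*p+1)) :
    Matrix (Fin (2*p+1)) (Fin (2*p+1)) ℝ :=
  if a = pmid p then Fmix11 p g g1 b
  else if b = pmid p then Fmix11 p g g1 a
  else Fstd11 p a b

namespace AIIIhelp

lemma theta2_val (p : ℕ) (a : Fin (2*p+1)) :
    (theta2 p a : ℕ) = if (a : ℕ) < p then (a : ℕ) + p + 1
      else if (a : ℕ) = p then (a : ℕ) else (a : ℕ) - p - 1 := by
  unfold theta2; split_ifs <;> rfl

lemma pmid_val (p : ℕ) : ((pmid p) : ℕ) = p := rfl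

lemma theta2_theta2 (p : ℕ) (a : Fin (2*p+1)) : theta2 p (theta2 p a) = a := by
  have h := a.isLt
  have h1 := theta2_val p a
  apply Fin.ext
  rw [theta2_val, h1]
  split_ifs <;> omega

lemma theta2_eq_iff (p : ℕ) (a i : Fin (2*p+1)) : theta2 p a = i ↔ a = theta2 p i :=
  ⟨fun h => by rw [← h, theta2_theta2], fun h => by rw [h, theta2_theta2]⟩

lemma theta2_eq_mid_iff (p : ℕ) (a : Fin (2*p+1)) : theta2 p a = pmid p ↔ a = pmid p := by
  rw [Fin.ext_iff, Fin.ext_iff, theta2_val, pmid_val]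
  have := a.isLt
  split_ifs <;> omega

lemma theta2_mid (p : ℕ) : theta2 p (pmid p) = pmid p := by
  apply Fin.ext
  rw [theta2_val, pmid_val]
  split_ifs <;> omega

lemma theta2_ne_self (p : ℕ) {a : Fin (2*p+1)} (ha : a ≠ pmid p) : theta2 p a ≠ a := by
  have h := a.isLt
  have ha' : (a : ℕ) ≠ p := fun hc => ha (Fin.ext (by rw [hc, pmid_val]))
  intro hc
  have h2 := congrArg Fin.val hc
  rw [theta2_val] at h2
  split_ifs at h2 <;> omega

/-- indicator -/
noncomputable def chi {m : ℕ} (i a : Fin m) : ℝ := if a = i then 1 else 0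

lemma cardU (p : ℕ) : ((Finset.univ : Finset (Fin (2*p+1))).erase (pmid p)).card = 2*p := by
  rw [Finset.card_erase_of_mem (Finset.mem_univ _), Finset.card_univ, Fintype.card_fin]
  omega

lemma sum_chi_U (p : ℕ) (i : Fin (2*p+1)) :
    ∑ a ∈ Finset.univ.erase (pmid p), chi i a = 1 - chi i (pmid p) := by
  unfold chi
  rw [Finset.sum_ite_eq' (Finset.univ.erase (pmid p)) i fun _ => (1:ℝ)]
  by_cases h : i = pmid p
  · simp [h]
  · simp [Finset.mem_erase, h, Ne.symm h]

lemma sum_chitheta_U (p : ℕ) (i : Fin (2*p+1)) :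
    ∑ a ∈ Finset.univ.erase (pmid p), chi i (theta2 p a) = 1 - chi i (pmid p) := by
  have hcong : ∀ a, chi i (theta2 p a) = if a = theta2 p i then (1:ℝ) else 0 := fun a => by
    unfold chi; exact if_congr (theta2_eq_iff p a i) rfl rfl
  rw [Finset.sum_congr rfl fun a _ => hcong a,
    Finset.sum_ite_eq' (Finset.univ.erase (pmid p)) (theta2 p i) fun _ => (1:ℝ)]
  unfold chi
  by_cases h : i = pmid p
  · subst h; simp [theta2_mid]
  · have h2 : theta2 p i ≠ pmid p := fun hc => h ((theta2_eq_mid_iff p i).mp hc)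
    simp [Finset.mem_erase, h2, Ne.symm h]

lemma sum_U_affine (p : ℕ) (i : Fin (2*p+1)) (f : Fin (2*p+1) → ℝ) (c0 c1 c2 : ℝ)
    (h : ∀ a ∈ Finset.univ.erase (pmid p),
      f a = c1 * chi i a + c2 * chi i (theta2 p a) + c0) :
    ∑ a ∈ Finset.univ.erase (pmid p), f a
      = c1 * (1 - chi i (pmid p)) + c2 * (1 - chi i (pmid p)) + (2*p : ℝ) * c0 := by
  rw [Finset.sum_congr rfl h, Finset.sum_add_distrib, Finset.sum_add_distrib,
    ← Finset.mul_sum, ← Finset.mul_sum, sum_chi_U, sum_chitheta_U, Finset.sum_const, cardU,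
    nsmul_eq_mul]
  push_cast
  ring



lemma Fstd_diag (p : ℕ) (a b i : Fin (2*p+1)) :
    Fstd11 p a b i i = -(1/4) * (chi i a + chi i (theta2 p a) + chi i b + chi i (theta2 p b))
      + ((2*p+1 : ℝ))⁻¹ := by
  simp only [Fstd11, chi, Matrix.add_apply, Matrix.smul_apply, Matrix.one_apply_eq,
    Matrix.single, Matrix.of_apply, and_self, smul_eq_mul, mul_one]

lemma Fmix_diag (p : ℕ) (g g1 : ℝ) (a i : Fin (2*p+1)) :
    Fmix11 p g g1 a i i = -(g1/(4*g)) * (chi i a + chi i (theta2 p a))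
      - (g/(2*g1)) * chi i (pmid p) + ((2*p+1 : ℝ))⁻¹ * (g1/(2*g) + g/(2*g1)) := by
  simp only [Fmix11, chi, Matrix.add_apply, Matrix.sub_apply, Matrix.smul_apply,
    Matrix.one_apply_eq, Matrix.single, Matrix.of_apply, and_self, smul_eq_mul, mul_one]

variable {p : ℕ} {g g1 g2 : ℝ} {a b : Fin (2*p+1)}

lemma g11_self : g11 p g g1 g2 a a = 0 := by simp [g11]

lemma g11_mid_left (hb : b ≠ pmid p) : g11 p g g1 g2 (pmid p) b = g1 := by
  unfold g11
  rw [if_neg (fun h => hb h.symm), if_pos (Or.inl ⟨rfl, hb⟩)]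

lemma g11_mid_right (ha : a ≠ pmid p) : g11 p g g1 g2 a (pmid p) = g1 := by
  unfold g11
  rw [if_neg ha, if_pos (Or.inr ⟨ha, rfl⟩)]

lemma g11_theta (ha : a ≠ pmid p) : g11 p g g1 g2 a (theta2 p a) = g2 := by
  unfold g11
  rw [if_neg (fun h => theta2_ne_self p ha h.symm),
    if_neg (by rintro (⟨h1, -⟩ | ⟨-, h2⟩); exact ha h1; exact ha ((theta2_eq_mid_iff p a).mp h2)),
    if_pos ⟨rfl, ha⟩]

lemma g11_gen (ha : a ≠ pmid p) (hb : b ≠ pmid p) (hab : a ≠ b) (hbt : b ≠ theta2 p a) :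
    g11 p g g1 g2 a b = g := by
  unfold g11
  rw [if_neg hab, if_neg (by rintro (⟨h1, -⟩ | ⟨-, h2⟩); exact ha h1; exact hb h2),
    if_neg (fun h => hbt h.1)]

lemma F11_mid_left : F11 p g g1 (pmid p) b = Fmix11 p g g1 b := if_pos rfl

lemma F11_mid_right (ha : a ≠ pmid p) : F11 p g g1 a (pmid p) = Fmix11 p g g1 a := by
  unfold F11; rw [if_neg ha, if_pos rfl]

lemma F11_std (ha : a ≠ pmid p) (hb : b ≠ pmid p) : F11 p g g1 a b = Fstd11 p a b := by
  unfold F11; rw [if_neg ha, if_neg hb]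

lemma std_off {i j : Fin (2*p+1)} (hij : i ≠ j) (c : Fin (2*p+1)) (x : ℝ) :
    Matrix.single c c x i j = 0 := by
  simp only [Matrix.single, Matrix.of_apply, ite_eq_right_iff]
  rintro ⟨rfl, rfl⟩
  exact absurd rfl hij

lemma F11_off {i j : Fin (2*p+1)} (hij : i ≠ j) (a b : Fin (2*p+1)) :
    F11 p g g1 a b i j = 0 := by
  unfold F11 Fmix11 Fstd11
  split_ifs <;>
    simp [Matrix.add_apply, Matrix.sub_apply, Matrix.smul_apply, Matrix.one_apply_ne hij,
      std_off hij]



set_option maxHeartbeats 2000000 in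
lemma key (p : ℕ) (g g1 g2 : ℝ) (hg : g ≠ 0) (hg1 : g1 ≠ 0)
    (hrel : g1^2 - 2*g^2 + g*g2 = 0) (i : Fin (2*p+1)) :
    ∑ a : Fin (2*p+1), ∑ b : Fin (2*p+1), g11 p g g1 g2 a b * F11 p g g1 a b i i = 0 := by
  have hn : (2*p+1 : ℝ) ≠ 0 := by positivity
  set X := chi i (pmid p) with hX
  set c : ℝ := ((2*p+1 : ℝ))⁻¹ with hc
  set K : ℝ := g1/(2*g) + g/(2*g1) with hK
  have hSmix : ∑ a ∈ Finset.univ.erase (pmid p), Fmix11 p g g1 a i i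
      = -(g1/(4*g)) * (1 - X) + (-(g1/(4*g))) * (1 - X)
        + (2*p : ℝ) * (-(g/(2*g1)) * X + c * K) :=
    sum_U_affine p i _ _ _ _ (fun a _ => by
      rw [Fmix_diag]; simp only [hc, hK, hX]; ring)
  have hmid : ∑ b : Fin (2*p+1), g11 p g g1 g2 (pmid p) b * F11 p g g1 (pmid p) b i i
      = g1 * (-(g1/(4*g)) * (1 - X) + (-(g1/(4*g))) * (1 - X)
        + (2*p : ℝ) * (-(g/(2*g1)) * X + c * K)) := by
    rw [← Finset.add_sum_erase _ _ (Finset.mem_univ (pmid p)), g11_self, zero_mul, zero_add,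
      ← hSmix, Finset.mul_sum]
    refine Finset.sum_congr rfl fun b hb => ?_
    rw [g11_mid_left (Finset.mem_erase.mp hb).1, F11_mid_left]
  have hInner : ∀ a ∈ Finset.univ.erase (pmid p),
      (∑ b : Fin (2*p+1), g11 p g g1 g2 a b * F11 p g g1 a b i i)
      = (-(g1^2/(4*g)) - g*(2*p:ℝ)/4 + g/2 - (g2-g)/2) * chi i a
        + (-(g1^2/(4*g)) - g*(2*p:ℝ)/4 + g/2 - (g2-g)/2) * chi i (theta2 p a)
        + (-(g/2)*X + g1*c*K + g*(-(1/4)*(1-X) - (1/4)*(1-X)) + g*(2*p:ℝ)*c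
            - g*c + (g2-g)*c) := by
    intro a haU
    have ha : a ≠ pmid p := (Finset.mem_erase.mp haU).1
    have hta : theta2 p a ∈ Finset.univ.erase (pmid p) :=
      Finset.mem_erase.mpr ⟨fun h => ha ((theta2_eq_mid_iff p a).mp h), Finset.mem_univ _⟩
    have hSstd : ∑ b ∈ Finset.univ.erase (pmid p), Fstd11 p a b i i
        = -(1/4) * (1 - X) + (-(1/4)) * (1 - X)
          + (2*p : ℝ) * (-(1/4) * (chi i a + chi i (theta2 p a)) + c) :=
      sum_U_affine p i _ _ _ _ (fun b _ => by
        rw [Fstd_diag]; simp only [hc, hX]; ring)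
    have hU : ∑ b ∈ Finset.univ.erase (pmid p), g11 p g g1 g2 a b * F11 p g g1 a b i i
        = g * (∑ b ∈ Finset.univ.erase (pmid p), Fstd11 p a b i i)
          + (-(g * Fstd11 p a a i i)
            + (g2 - g) * Fstd11 p a (theta2 p a) i i) := by
      have step : ∀ b ∈ Finset.univ.erase (pmid p),
          g11 p g g1 g2 a b * F11 p g g1 a b i i
          = g * Fstd11 p a b i i + ((if b = a then -(g * Fstd11 p a a i i) else 0)
            + (if b = theta2 p a then (g2 - g) * Fstd11 p a (theta2 p a) i i else 0)) := by
        intro b hb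
        have hb' : b ≠ pmid p := (Finset.mem_erase.mp hb).1
        rw [F11_std ha hb']
        by_cases hba : b = a
        · subst hba
          rw [g11_self, if_pos rfl, if_neg (fun h => theta2_ne_self p ha h.symm)]
          ring
        · by_cases hbt : b = theta2 p a
          · subst hbt
            rw [g11_theta ha, if_neg hba, if_pos rfl]
            ring
          · rw [g11_gen ha hb' (fun h => hba h.symm) hbt, if_neg hba, if_neg hbt]
            ring
      rw [Finset.sum_congr rfl step, Finset.sum_add_distrib, Finset.sum_add_distrib,
        ← Finset.mul_sum, Finset.sum_ite_eq' _ a, Finset.sum_ite_eq' _ (theta2 p a),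
        if_pos haU, if_pos hta]
    rw [← Finset.add_sum_erase _ _ (Finset.mem_univ (pmid p)), g11_mid_right ha,
      F11_mid_right ha, hU, hSstd, Fmix_diag, Fstd_diag, Fstd_diag, theta2_theta2]
    simp only [hc, hK, hX]
    field_simp
    ring
  rw [← Finset.add_sum_erase _ _ (Finset.mem_univ (pmid p)), hmid,
    sum_U_affine p i _ _ _ _ hInner, ← hX]
  have final : g1 * (-(g1/(4*g)) * (1 - X) + (-(g1/(4*g))) * (1 - X)
        + (2*p : ℝ) * (-(g/(2*g1)) * X + c * K))
      + ((-(g1^2/(4*g)) - g*(2*p:ℝ)/4 + g/2 - (g2-g)/2) * (1 - X)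
        + (-(g1^2/(4*g)) - g*(2*p:ℝ)/4 + g/2 - (g2-g)/2) * (1 - X)
        + (2*p : ℝ) * (-(g/2)*X + g1*c*K + g*(-(1/4)*(1-X) - (1/4)*(1-X)) + g*(2*p:ℝ)*c
            - g*c + (g2-g)*c))
      = ((-(1 - X) + (2*p:ℝ)*X)/(g*(2*p+1))) * (g1^2 - 2*g^2 + g*g2) := by
    rw [hc, hK]
    field_simp
    ring
  rw [final, hrel, mul_zero]

end AIIIhelp

theorem stmt_13 (p : ℕ) (hp : 1 ≤ p) (g g1 g2 : ℝ) (hg : g ≠ 0) (hg1 : g1 ≠ 0)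
    (hrel : g1^2 - 2*g^2 + g*g2 = 0) :
    ∑ a : Fin (2*p+1), ∑ b ∈ Finset.univ.filter (fun b : Fin (2*p+1) => b ≠ a),
      g11 p g g1 g2 a b • F11 p g g1 a b = 0 := by
  ext i j
  simp only [Matrix.sum_apply, Matrix.smul_apply, smul_eq_mul, Matrix.zero_apply]
  by_cases hij : i = j
  · subst hij
    have hfe : ∀ a : Fin (2*p+1),
        ∑ b ∈ Finset.univ.filter (fun b : Fin (2*p+1) => b ≠ a),
          g11 p g g1 g2 a b * F11 p g g1 a b i i
        = ∑ b : Fin (2*p+1), g11 p g g1 g2 a b * F11 p g g1 a b i i := fun a => by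
      rw [Finset.filter_ne', Finset.sum_erase _ (by rw [AIIIhelp.g11_self, zero_mul])]
    rw [Finset.sum_congr rfl fun a _ => hfe a]
    exact AIIIhelp.key p g g1 g2 hg hg1 hrel i
  · refine Finset.sum_eq_zero fun a _ => Finset.sum_eq_zero fun b _ => ?_
    rw [AIIIhelp.F11_off hij, mul_zero]
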